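/- Let f : ℝ^{n×p} → ℝ be continuously differentiable, let σ ≠ 0 and β > 0, define A(X) = (1 − σ)X + σXXᵀX, and define h(X) = (1 + 1/(2σ))·f(X) − (1/(2σ))·f(A(X)) + (β/4)·‖XᵀX − I_p‖_F². Then h is differentiable and for every X ∈ ℝ^{n×p}, ∇h(X) = (1 + 1/(2σ))·∇f(X) − ∇f(A(X))·(((1 − σ)/(2σ))·I_p + (1/2)·XᵀX) − X·sym(Xᵀ∇f(A(X))) + β·X(XᵀX − I_p). -/

import Mathlib

open Matrix BigOperators Finset Kronecker

/- Equip matrix spaces with the Frobenius norm (finite-dimensional, so the resulting calculus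
notions such as `fderiv`/`Differentiable` are norm-independent). -/
attribute [local instance] Matrix.frobeniusNormedAddCommGroup Matrix.frobeniusNormedSpace

/-- The Frobenius norm of a real matrix. -/
noncomputable def frob {m k : Type*} [Fintype m] [Fintype k] (A : Matrix m k ℝ) : ℝ :=
  Real.sqrt (∑ i, ∑ j, (A i j) ^ 2)

/-- The trace inner product ⟨A, B⟩ = tr(AᵀB) of real matrices. -/
noncomputable def minner {m k : Type*} [Fintype m] [Fintype k] (A B : Matrix m k ℝ) : ℝ :=
  (Aᵀ * B).trace

/-- The symmetric part sym(B) = (B + Bᵀ)/2 of a square matrix. -/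
noncomputable def symPart {k : Type*} (B : Matrix k k ℝ) : Matrix k k ℝ :=
  (1 / 2 : ℝ) • (B + Bᵀ)

/-- The generalized Riemannian gradient G(X) = ∇f(X)((3/2)I - (1/2)XᵀX) - X·sym(Xᵀ∇f(X)),
expressed in terms of the Euclidean gradient matrix `Gf = ∇f(X)`. -/
noncomputable def Gdir {n p : ℕ} (Gf X : Matrix (Fin n) (Fin p) ℝ) :
    Matrix (Fin n) (Fin p) ℝ :=
  Gf * ((3 / 2 : ℝ) • (1 : Matrix (Fin p) (Fin p) ℝ) - (1 / 2 : ℝ) • (Xᵀ * X))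
    - X * symPart (Xᵀ * Gf)

/-- The feasibility direction E(X) = X(XᵀX - I). -/
noncomputable def Edir {n p : ℕ} (X : Matrix (Fin n) (Fin p) ℝ) :
    Matrix (Fin n) (Fin p) ℝ :=
  X * (Xᵀ * X - 1)

/-- The spectral norm (largest singular value) of a real matrix, as the operator norm of the
associated Euclidean linear map. -/
noncomputable def specNorm {m k : Type*} [Fintype m] [Fintype k] [DecidableEq k]
    (A : Matrix m k ℝ) : ℝ :=
  ‖LinearMap.toContinuousLinearMap (Matrix.toEuclideanLin A)‖

theorem Matrix.isHermitian_transpose_mul_self {m k α : Type*} [Fintype m] [CommSemiring α]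
    [StarRing α] [TrivialStar α] (A : Matrix m k α) : (Aᵀ * A).IsHermitian := by
  rw [IsHermitian, conjTranspose_mul, conjTranspose_eq_transpose_of_trivial,
    conjTranspose_eq_transpose_of_trivial, transpose_transpose]

/-- The smallest singular value of a real matrix: the square root of the smallest eigenvalue
of AᵀA (= AᴴA over ℝ). -/
noncomputable def sigmaMin {m k : Type*} [Fintype m] [Fintype k] [DecidableEq m] [DecidableEq k]
    (A : Matrix m k ℝ) : ℝ :=
  Real.sqrt (⨅ i, (Matrix.isHermitian_transpose_mul_self A).eigenvalues i)

noncomputable def mulL (a b c : ℕ) :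
    Matrix (Fin a) (Fin b) ℝ →L[ℝ] Matrix (Fin b) (Fin c) ℝ →L[ℝ] Matrix (Fin a) (Fin c) ℝ :=
  LinearMap.toContinuousLinearMap
  { toFun := fun A => LinearMap.toContinuousLinearMap
      { toFun := fun B => A * B
        map_add' := fun B C => Matrix.mul_add A B C
        map_smul' := fun r B => Matrix.mul_smul A r B }
    map_add' := by intro A B; ext C; simp [Matrix.add_mul]
    map_smul' := by intro r A; ext C; simp [Matrix.smul_mul] }

@[simp] lemma mulL_apply (a b c : ℕ) (A : Matrix (Fin a) (Fin b) ℝ) (B : Matrix (Fin b) (Fin c) ℝ) :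
    mulL a b c A B = A * B := rfl

noncomputable def transL (a b : ℕ) : Matrix (Fin a) (Fin b) ℝ →L[ℝ] Matrix (Fin b) (Fin a) ℝ :=
  LinearMap.toContinuousLinearMap
  { toFun := fun A => Aᵀ
    map_add' := fun A B => Matrix.transpose_add A B
    map_smul' := fun r A => Matrix.transpose_smul r A }

@[simp] lemma transL_apply (a b : ℕ) (A : Matrix (Fin a) (Fin b) ℝ) : transL a b A = Aᵀ := rfl

noncomputable def entryL (a b : ℕ) (i : Fin a) (j : Fin b) : Matrix (Fin a) (Fin b) ℝ →L[ℝ] ℝ :=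
  LinearMap.toContinuousLinearMap
  { toFun := fun A => A i j
    map_add' := fun A B => rfl
    map_smul' := fun r A => rfl }

@[simp] lemma entryL_apply (a b : ℕ) (i : Fin a) (j : Fin b) (A : Matrix (Fin a) (Fin b) ℝ) :
    entryL a b i j A = A i j := rfl

lemma HasFDerivAt.matmul {E : Type*} [NormedAddCommGroup E] [NormedSpace ℝ E]
    {a b c : ℕ} {u : E → Matrix (Fin a) (Fin b) ℝ} {v : E → Matrix (Fin b) (Fin c) ℝ}
    {u' : E →L[ℝ] Matrix (Fin a) (Fin b) ℝ} {v' : E →L[ℝ] Matrix (Fin b) (Fin c) ℝ} {x : E}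
    (hu : HasFDerivAt u u' x) (hv : HasFDerivAt v v' x) :
    HasFDerivAt (fun x => u x * v x)
      (@HAdd.hAdd (E →L[ℝ] Matrix (Fin a) (Fin c) ℝ) (E →L[ℝ] Matrix (Fin a) (Fin c) ℝ) _ instHAdd (((mulL a b c).flip (v x)).comp u') (((mulL a b c) (u x)).comp v')) x := by
  have H := ((mulL a b c).isBoundedBilinearMap.hasFDerivAt (u x, v x)).comp x (hu.prodMk hv)
  refine HasFDerivAt.congr_fderiv H ?_
  ext w
  simp [ContinuousLinearMap.isBoundedBilinearMap, IsBoundedBilinearMap.deriv_apply]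
  exact add_comm _ _

lemma minner_eq_sum {m k : Type*} [Fintype m] [Fintype k] (A B : Matrix m k ℝ) :
    minner A B = ∑ i, ∑ j, A i j * B i j := by
  simp only [minner, Matrix.trace, Matrix.diag, Matrix.mul_apply, Matrix.transpose_apply]
  exact Finset.sum_comm

lemma minner_comm {m k : Type*} [Fintype m] [Fintype k] (A B : Matrix m k ℝ) :
    minner A B = minner B A := by
  simp only [minner_eq_sum, mul_comm]

@[simp] lemma minner_add_left {m k : Type*} [Fintype m] [Fintype k] (A B C : Matrix m k ℝ) :
    minner (A + B) C = minner A C + minner B C := by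
  simp [minner_eq_sum, add_mul, Finset.sum_add_distrib]

@[simp] lemma minner_sub_left {m k : Type*} [Fintype m] [Fintype k] (A B C : Matrix m k ℝ) :
    minner (A - B) C = minner A C - minner B C := by
  simp [minner_eq_sum, sub_mul, Finset.sum_sub_distrib]

@[simp] lemma minner_smul_left {m k : Type*} [Fintype m] [Fintype k] (r : ℝ) (A C : Matrix m k ℝ) :
    minner (r • A) C = r * minner A C := by
  simp [minner_eq_sum, Finset.mul_sum, mul_assoc]

@[simp] lemma minner_add_right {m k : Type*} [Fintype m] [Fintype k] (A B C : Matrix m k ℝ) :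
    minner A (B + C) = minner A B + minner A C := by
  simp [minner_eq_sum, mul_add, Finset.sum_add_distrib]

@[simp] lemma minner_smul_right {m k : Type*} [Fintype m] [Fintype k] (r : ℝ) (A C : Matrix m k ℝ) :
    minner A (r • C) = r * minner A C := by
  rw [minner_comm, minner_smul_left, minner_comm]

lemma minner_mul_right {m k l : Type*} [Fintype m] [Fintype k] [Fintype l]
    (A : Matrix m k ℝ) (B : Matrix m l ℝ) (C : Matrix l k ℝ) :
    minner A (B * C) = minner (A * Cᵀ) B := by
  simp only [minner, Matrix.transpose_mul, Matrix.transpose_transpose]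
  rw [← Matrix.mul_assoc, Matrix.trace_mul_comm, Matrix.mul_assoc]

lemma minner_mul_left {m k l : Type*} [Fintype m] [Fintype k] [Fintype l]
    (A : Matrix m k ℝ) (B : Matrix m l ℝ) (C : Matrix l k ℝ) :
    minner A (B * C) = minner (Bᵀ * A) C := by
  simp only [minner, Matrix.transpose_mul, Matrix.transpose_transpose, Matrix.mul_assoc]

lemma minner_transpose {m k : Type*} [Fintype m] [Fintype k] (A : Matrix m k ℝ) (B : Matrix k m ℝ) :
    minner A Bᵀ = minner Aᵀ B := by
  simp only [minner]
  rw [← Matrix.trace_transpose, Matrix.transpose_mul, Matrix.transpose_transpose,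
    Matrix.transpose_transpose, Matrix.trace_mul_comm]


lemma frob_sq {m k : Type*} [Fintype m] [Fintype k] (M : Matrix m k ℝ) :
    frob M ^ 2 = ∑ i, ∑ j, M i j * M i j := by
  rw [frob, Real.sq_sqrt (by positivity)]
  simp [sq]

/-- For `f` continuously differentiable with gradient `gradf`, `σ ≠ 0`, `β > 0`,
`A(X) = (1 - σ)X + σXXᵀX` and
`h(X) = (1 + 1/(2σ))f(X) - (1/(2σ))f(A(X)) + (β/4)‖XᵀX - I‖_F²`, the function `h` is
differentiable and its gradient is
`∇h(X) = (1 + 1/(2σ))∇f(X) - ∇f(A(X))(((1-σ)/(2σ))I + (1/2)XᵀX) - X·sym(Xᵀ∇f(A(X)))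
  + βX(XᵀX - I)`. -/
theorem stmt10 {n p : ℕ} (f : Matrix (Fin n) (Fin p) ℝ → ℝ)
    (hf : ContDiff ℝ 1 f)
    (gradf : Matrix (Fin n) (Fin p) ℝ → Matrix (Fin n) (Fin p) ℝ)
    (hgrad : ∀ X V, fderiv ℝ f X V = minner (gradf X) V)
    (σ β : ℝ) (hσ : σ ≠ 0) (hβ : 0 < β)
    (A : Matrix (Fin n) (Fin p) ℝ → Matrix (Fin n) (Fin p) ℝ)
    (hA : ∀ X, A X = (1 - σ) • X + σ • (X * Xᵀ * X))
    (h : Matrix (Fin n) (Fin p) ℝ → ℝ)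
    (hh : ∀ X, h X = (1 + 1 / (2 * σ)) * f X - 1 / (2 * σ) * f (A X)
        + β / 4 * frob (Xᵀ * X - 1) ^ 2) :
    Differentiable ℝ h ∧
      ∀ X V, fderiv ℝ h X V
        = minner ((1 + 1 / (2 * σ)) • gradf X
            - gradf (A X) * (((1 - σ) / (2 * σ)) • (1 : Matrix (Fin p) (Fin p) ℝ)
                + (1 / 2 : ℝ) • (Xᵀ * X))
            - X * symPart (Xᵀ * gradf (A X))
            + β • (X * (Xᵀ * X - 1))) V := by
  have hfun : h = fun X => (1 + 1 / (2 * σ)) * f X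
      - 1 / (2 * σ) * f ((1 - σ) • X + σ • (X * Xᵀ * X))
      + β / 4 * ∑ i, ∑ j, (Xᵀ * X - 1 : Matrix (Fin p) (Fin p) ℝ) i j
          * (Xᵀ * X - 1 : Matrix (Fin p) (Fin p) ℝ) i j := by
    funext X
    rw [hh X, hA X, frob_sq]
  have key : ∀ X : Matrix (Fin n) (Fin p) ℝ, ∃ L : Matrix (Fin n) (Fin p) ℝ →L[ℝ] ℝ,
      HasFDerivAt h L X ∧ ∀ V, L V
        = minner ((1 + 1 / (2 * σ)) • gradf X
            - gradf (A X) * (((1 - σ) / (2 * σ)) • (1 : Matrix (Fin p) (Fin p) ℝ)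
                + (1 / 2 : ℝ) • (Xᵀ * X))
            - X * symPart (Xᵀ * gradf (A X))
            + β • (X * (Xᵀ * X - 1))) V := by
    intro X
    have hfd1 : HasFDerivAt f (fderiv ℝ f X) X := (hf.differentiable one_ne_zero X).hasFDerivAt
    have hT : HasFDerivAt (fun X' : Matrix (Fin n) (Fin p) ℝ => X'ᵀ) (transL n p) X :=
      (transL n p).hasFDerivAt
    have h1 := (hasFDerivAt_id X).matmul hT
    have h2 := h1.matmul (hasFDerivAt_id X)
    have h3 := ((hasFDerivAt_id X).const_smul (1 - σ)).add (h2.const_smul σ)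
    set Y := (1 - σ) • X + σ • (X * Xᵀ * X) with hY
    have hfd2 : HasFDerivAt f (fderiv ℝ f Y) Y := (hf.differentiable one_ne_zero Y).hasFDerivAt
    have h4 := hfd2.comp X h3
    have h5 := (hT.matmul (hasFDerivAt_id X)).sub_const (1 : Matrix (Fin p) (Fin p) ℝ)
    have h6 : HasFDerivAt (fun M : Matrix (Fin p) (Fin p) ℝ => ∑ i, ∑ j, M i j * M i j)
        (∑ i, ∑ j, ((Xᵀ * X - 1 : Matrix (Fin p) (Fin p) ℝ) i j • entryL p p i j
          + (Xᵀ * X - 1 : Matrix (Fin p) (Fin p) ℝ) i j • entryL p p i j)) (Xᵀ * X - 1) := by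
      apply HasFDerivAt.fun_sum
      intro i _
      apply HasFDerivAt.fun_sum
      intro j _
      exact ((entryL p p i j).hasFDerivAt (x := Xᵀ * X - 1)).mul
        ((entryL p p i j).hasFDerivAt (x := Xᵀ * X - 1))
    have h7 := h6.comp X h5
    have h8 := ((hfd1.const_mul (1 + 1 / (2 * σ))).sub (h4.const_mul (1 / (2 * σ)))).add
      (h7.const_mul (β / 4))
    rw [hfun]
    refine ⟨_, h8, ?_⟩
    intro V
    simp only [ContinuousLinearMap.add_apply, ContinuousLinearMap.coe_sub',
      ContinuousLinearMap.coe_comp', Function.comp_apply, ContinuousLinearMap.coe_smul',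
      Pi.sub_apply, Pi.smul_apply, ContinuousLinearMap.comp_apply, ContinuousLinearMap.smul_apply,
      ContinuousLinearMap.sum_apply, ContinuousLinearMap.coe_sum', Finset.sum_apply,
      mulL_apply, transL_apply, entryL_apply, ContinuousLinearMap.id_apply,
      ContinuousLinearMap.flip_apply, hgrad, hA X, smul_eq_mul]
    simp only [id_eq]
    rw [← hY]
    change (1 + 1 / (2 * σ)) * fderiv ℝ f X V - 1 / (2 * σ) * fderiv ℝ f Y
        ((1 - σ) • V + σ • ((V * Xᵀ + X * Vᵀ) * X + X * Xᵀ * V))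
        + β / 4 * (∑ i : Fin p, ∑ j : Fin p, ((Xᵀ * X - 1 : Matrix (Fin p) (Fin p) ℝ) i j • entryL p p i j
          + (Xᵀ * X - 1 : Matrix (Fin p) (Fin p) ℝ) i j • entryL p p i j)) (Vᵀ * X + Xᵀ * V) = _
    simp only [ContinuousLinearMap.sum_apply, ContinuousLinearMap.add_apply,
      ContinuousLinearMap.smul_apply, entryL_apply, smul_eq_mul, hgrad]
    have hsum : ∑ x : Fin p, ∑ y : Fin p,
        ((Xᵀ * X - 1 : Matrix (Fin p) (Fin p) ℝ) x y * (Vᵀ * X + Xᵀ * V) x y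
          + (Xᵀ * X - 1 : Matrix (Fin p) (Fin p) ℝ) x y * (Vᵀ * X + Xᵀ * V) x y)
        = 2 * minner (Xᵀ * X - 1) (Vᵀ * X + Xᵀ * V) := by
      rw [minner_eq_sum, Finset.mul_sum]
      refine Finset.sum_congr rfl fun i _ => ?_
      rw [Finset.mul_sum]
      exact Finset.sum_congr rfl fun j _ => by ring
    rw [hsum]
    have hd : minner (Xᵀ * X - 1) (Vᵀ * X + Xᵀ * V) = 2 * minner (X * (Xᵀ * X - 1)) V := by
      rw [minner_add_right, minner_mul_right, minner_transpose, minner_mul_left]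
      simp only [Matrix.transpose_mul, Matrix.transpose_sub, Matrix.transpose_transpose,
        Matrix.transpose_one]
      ring
    rw [hd]
    have ha : minner (gradf Y) (V * Xᵀ * X) = minner (gradf Y * (Xᵀ * X)) V := by
      rw [Matrix.mul_assoc, minner_mul_right, Matrix.transpose_mul, Matrix.transpose_transpose]
    have hb : minner (gradf Y) (X * Vᵀ * X) = minner (X * ((gradf Y)ᵀ * X)) V := by
      rw [Matrix.mul_assoc, minner_mul_left, minner_mul_right, minner_transpose]
      simp only [Matrix.transpose_mul, Matrix.transpose_transpose, Matrix.mul_assoc]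
    have hc : minner (gradf Y) (X * Xᵀ * V) = minner (X * (Xᵀ * gradf Y)) V := by
      rw [Matrix.mul_assoc, minner_mul_left, minner_mul_left, Matrix.transpose_transpose]
    rw [show (1 - σ) • V + σ • ((V * Xᵀ + X * Vᵀ) * X + X * Xᵀ * V)
        = (1 - σ) • V + σ • (V * Xᵀ * X + X * Vᵀ * X + X * Xᵀ * V) from by
      rw [Matrix.add_mul]]
    rw [minner_add_right, minner_smul_right, minner_smul_right, minner_add_right,
      minner_add_right, ha, hb, hc]
    rw [show ((1 + 1 / (2 * σ)) • gradf X
          - gradf Y * (((1 - σ) / (2 * σ)) • (1 : Matrix (Fin p) (Fin p) ℝ)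
              + (1 / 2 : ℝ) • (Xᵀ * X))
          - X * symPart (Xᵀ * gradf Y)
          + β • (X * (Xᵀ * X - 1)))
        = ((1 + 1 / (2 * σ)) • gradf X
          - (((1 - σ) / (2 * σ)) • gradf Y + (1 / 2 : ℝ) • (gradf Y * (Xᵀ * X)))
          - ((1 / 2 : ℝ) • (X * (Xᵀ * gradf Y)) + (1 / 2 : ℝ) • (X * ((gradf Y)ᵀ * X)))
          + β • (X * (Xᵀ * X - 1))) from by
      rw [symPart]
      simp only [Matrix.mul_add, Matrix.mul_smul, Matrix.mul_one, Matrix.transpose_mul,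
        Matrix.transpose_transpose, smul_add]]
    rw [minner_add_left, minner_sub_left, minner_sub_left, minner_smul_left, minner_add_left,
      minner_smul_left, minner_smul_left, minner_add_left, minner_smul_left, minner_smul_left,
      minner_smul_left]
    field_simp
    ring
  refine ⟨fun X => ((key X).choose_spec.1).differentiableAt, fun X V => ?_⟩
  obtain ⟨L, hL, hLV⟩ := key X
  rw [hL.fderiv, hLV]
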